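/- Let (Ω, ℳ, P) be a probability space with a filtration (𝓕_s)_{s∈ℝ}, let Π be an n×n real matrix, T > 0, and fix t ≥ T and i ∈ {1,…,n}. Let qᵢ¹,…,qᵢⁿ : [0,∞) → ℝ₊ be continuous functions supported in [0,T] and set Qᵢ(τ) = diag(qᵢ¹(τ),…,qᵢⁿ(τ)). Suppose (s,ω) ↦ η(s,ω) and (s,ω) ↦ x(s,ω) are jointly measurable, that for every s, η(s) is 𝓕_s-measurable and almost surely a canonical basis vector of ℝⁿ and x(s) is 𝓕_s-measurable, integrable, and componentwise nonnegative almost surely with sup_{s∈[t−T,t]} E[‖x(s)‖₁] < ∞, and that for every τ ∈ [0,T], E[η(t) | 𝓕_{t−τ}] = e^{Πᵀτ} η(t−τ) almost surely. Define ζ(s) = E[η(s) ⊗ x(s)] and g_{ij}(τ) = qᵢʲ(τ) ((U_{ji} e^{Πᵀτ}) ⊗ u_jᵀ). Then E[ηᵢ(t) ∫₀^∞ Qᵢ(τ)x(t−τ)dτ] = Σ_{j=1}^{n} ∫₀^∞ g_{ij}(τ) ζ(t−τ) dτ. -/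

import Mathlib

open MeasureTheory Matrix
open scoped Kronecker

noncomputable section

/-- The 1-norm `‖x‖₁ = ∑ i |x i|`. -/
def oneNorm {ι : Type*} [Fintype ι] (x : ι → ℝ) : ℝ := ∑ i, |x i|

/-- A square real matrix is Metzler if its off-diagonal entries are nonnegative. -/
def IsMetzler {ι : Type*} [Fintype ι] (A : Matrix ι ι ℝ) : Prop :=
  ∀ i j, i ≠ j → 0 ≤ A i j

/-- A square real matrix is Hurwitz stable if all of its (complex) eigenvalues have
negative real parts. -/
def IsHurwitz {ι : Type*} [Fintype ι] [DecidableEq ι] (A : Matrix ι ι ℝ) : Prop :=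
  ∀ z ∈ spectrum ℂ (A.map (Complex.ofReal)), z.re < 0

/-- The matrix exponential `e^A`. -/
def matExp {ι : Type*} [Fintype ι] [DecidableEq ι] (A : Matrix ι ι ℝ) : Matrix ι ι ℝ :=
  NormedSpace.exp A

/-- The `i`-th canonical basis vector of `ℝⁿ`. -/
def basisVec {n : ℕ} (i : Fin n) : Fin n → ℝ := fun k => if k = i then 1 else 0

/-- Kronecker product of two vectors: `(u ⊗ v)_{(i,j)} = uᵢ vⱼ`. -/
def vecKron {n : ℕ} (u v : Fin n → ℝ) : Fin n × Fin n → ℝ := fun p => u p.1 * v p.2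

/-- Kronecker product `M ⊗ vᵀ` of an `n×n` matrix with a row vector: an `n × n²` matrix. -/
def matKronRow {n : ℕ} (M : Matrix (Fin n) (Fin n) ℝ) (v : Fin n → ℝ) :
    Matrix (Fin n) (Fin n × Fin n) ℝ := Matrix.of fun k p => M k p.1 * v p.2

/-- Kronecker product `u ⊗ F` of a column vector with an `n × n²` matrix: an `n² × n²` matrix. -/
def vecKronMat {n : ℕ} (u : Fin n → ℝ) (F : Matrix (Fin n) (Fin n × Fin n) ℝ) :
    Matrix (Fin n × Fin n) (Fin n × Fin n) ℝ := Matrix.of fun q p => u q.1 * F q.2 p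

/-- Kronecker product `rᵀ ⊗ Iₙ` of a row vector with the identity: an `n × n²` matrix
with block structure `[r₁ Iₙ … rₙ Iₙ]`. -/
def rowKronId {n : ℕ} (r : Fin n → ℝ) : Matrix (Fin n) (Fin n × Fin n) ℝ :=
  Matrix.of fun k p => r p.1 * (if k = p.2 then 1 else 0)

/-- Block-diagonal matrix `⨁ᵢ Aᵢ`. -/
def blockDiag {n : ℕ} (A : Fin n → Matrix (Fin n) (Fin n) ℝ) :
    Matrix (Fin n × Fin n) (Fin n × Fin n) ℝ :=
  Matrix.of fun q p => if q.1 = p.1 then A q.1 q.2 p.2 else 0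

/-- A piecewise-constant switching signal: constant between consecutive members of an
unbounded increasing sequence of switching times starting at `0`. -/
def PiecewiseConstant {α : Type*} (σ : ℝ → α) : Prop :=
  ∃ u : ℕ → ℝ, StrictMono u ∧ u 0 = 0 ∧ Filter.Tendsto u Filter.atTop Filter.atTop ∧
    ∀ k : ℕ, ∀ t ∈ Set.Ico (u k) (u (k + 1)), σ t = σ (u k)

section Helpers

variable {Ω : Type*} [MeasurableSpace Ω] {μ : Measure Ω}

lemma integrable_eval {κ : Type*} [Fintype κ] {f : Ω → κ → ℝ} (hf : Integrable f μ) (k : κ) :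
    Integrable (fun ω => f ω k) μ :=
  (ContinuousLinearMap.proj (R := ℝ) (φ := fun _ : κ => ℝ) k).integrable_comp hf

lemma integral_eval {κ : Type*} [Fintype κ] {f : Ω → κ → ℝ} (hf : Integrable f μ) (k : κ) :
    (∫ ω, f ω ∂μ) k = ∫ ω, f ω k ∂μ :=
  ((ContinuousLinearMap.proj (R := ℝ) (φ := fun _ : κ => ℝ) k).integral_comp_comm hf).symm

lemma oneNorm_nonneg {κ : Type*} [Fintype κ] (v : κ → ℝ) : 0 ≤ oneNorm v :=
  Finset.sum_nonneg fun _ _ => abs_nonneg _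

lemma abs_le_oneNorm {κ : Type*} [Fintype κ] (v : κ → ℝ) (k : κ) : |v k| ≤ oneNorm v :=
  Finset.single_le_sum (f := fun j => |v j|) (fun _ _ => abs_nonneg _) (Finset.mem_univ k)

lemma ae_prod_snd {α β : Type*} [MeasurableSpace α] [MeasurableSpace β]
    (ν : Measure α) (μ : Measure β) [SFinite ν] [SFinite μ] {p : β → Prop}
    (h : ∀ᵐ ω ∂μ, p ω) : ∀ᵐ z ∂(ν.prod μ), p z.2 := by
  rw [ae_iff] at h ⊢
  obtain ⟨N, hsub, hNm, hN0⟩ := exists_measurable_superset_of_null h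
  refine measure_mono_null (fun z hz => ?_) (?_ : (ν.prod μ) (Set.univ ×ˢ N) = 0)
  · exact ⟨Set.mem_univ _, hsub hz⟩
  · rw [Measure.prod_prod, hN0, mul_zero]

lemma setIntegral_Ici_eq_Icc {E : Type*} [NormedAddCommGroup E] [NormedSpace ℝ E]
    {T : ℝ} {f : ℝ → E} (h0 : ∀ τ : ℝ, τ ∉ Set.Icc (0:ℝ) T → f τ = 0) :
    ∫ τ in Set.Ici (0:ℝ), f τ = ∫ τ in Set.Icc (0:ℝ) T, f τ := by
  have h1 : ∫ τ in Set.Ici (0:ℝ), f τ = ∫ τ in Set.Ici (0:ℝ), (Set.Icc (0:ℝ) T).indicator f τ := by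
    refine integral_congr_ae (Filter.Eventually.of_forall fun τ => ?_)
    by_cases hτ : τ ∈ Set.Icc (0:ℝ) T
    · rw [Set.indicator_of_mem hτ]
    · rw [Set.indicator_of_notMem hτ, h0 τ hτ]
  rw [h1, setIntegral_indicator measurableSet_Icc,
    Set.inter_eq_self_of_subset_right Set.Icc_subset_Ici_self]

end Helpers

/-- `E[ηᵢ(t) ∫₀^∞ Qᵢ(τ) x(t−τ) dτ] = ∑ⱼ ∫₀^∞ g_{ij}(τ) ζ(t−τ) dτ`, where
`g_{ij}(τ) = qᵢʲ(τ) ((U_{ji} e^{Πᵀτ}) ⊗ uⱼᵀ)` and `ζ(s) = E[η(s) ⊗ x(s)]`. -/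
theorem stmt7 (n : ℕ) {Ω : Type*} [mΩ : MeasurableSpace Ω]
    (μ : Measure Ω) [IsProbabilityMeasure μ]
    (𝓕 : Filtration ℝ mΩ)
    (Pi : Matrix (Fin n) (Fin n) ℝ)
    (T : ℝ) (hT : 0 < T) (t : ℝ) (ht : T ≤ t) (i : Fin n)
    (q : Fin n → ℝ → ℝ) (hqc : ∀ j, Continuous (q j)) (hqnn : ∀ j τ, 0 ≤ q j τ)
    (hqsupp : ∀ j, ∀ τ : ℝ, τ ∉ Set.Icc (0 : ℝ) T → q j τ = 0)
    (η : ℝ → Ω → Fin n → ℝ) (x : ℝ → Ω → Fin n → ℝ)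
    (hηjm : Measurable fun sω : ℝ × Ω => η sω.1 sω.2)
    (hxjm : Measurable fun sω : ℝ × Ω => x sω.1 sω.2)
    (hηmeas : ∀ s : ℝ, Measurable[𝓕 s] (η s))
    (hηbasis : ∀ s : ℝ, ∀ᵐ ω ∂μ, ∃ a : Fin n, η s ω = basisVec a)
    (hxmeas : ∀ s : ℝ, Measurable[𝓕 s] (x s))
    (hxint : ∀ s : ℝ, Integrable (x s) μ)
    (hxnn : ∀ s : ℝ, ∀ᵐ ω ∂μ, ∀ k, 0 ≤ x s ω k)
    (hxbdd : ∃ K : ℝ, ∀ s ∈ Set.Icc (t - T) t, (∫ ω, oneNorm (x s ω) ∂μ) ≤ K)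
    (hcond : ∀ τ ∈ Set.Icc (0 : ℝ) T,
      μ[η t | 𝓕 (t - τ)] =ᵐ[μ]
        fun ω => (matExp (τ • Pi.transpose)).mulVec (η (t - τ) ω)) :
    (∫ ω, η t ω i • (∫ τ in Set.Ici (0 : ℝ), (fun k => q k τ * x (t - τ) ω k)) ∂μ) =
      ∑ j : Fin n,
        ∫ τ in Set.Ici (0 : ℝ),
          (q j τ • matKronRow (Matrix.single j i (1 : ℝ) * matExp (τ • Pi.transpose))
              (basisVec j)).mulVec
            (∫ ω, vecKron (η (t - τ) ω) (x (t - τ) ω) ∂μ) := by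
  classical
  -- basic measurability and integrability
  have hxm : ∀ s : ℝ, Measurable (x s) := fun s => (hxmeas s).mono (𝓕.le s) le_rfl
  have hηm : ∀ s : ℝ, Measurable (η s) := fun s => (hηmeas s).mono (𝓕.le s) le_rfl
  have hxint' : ∀ (s : ℝ) (k : Fin n), Integrable (fun ω => x s ω k) μ :=
    fun s k => integrable_eval (hxint s) k
  have honeint : ∀ s : ℝ, Integrable (fun ω => oneNorm (x s ω)) μ := fun s => by
    have : (fun ω => oneNorm (x s ω)) = fun ω => ∑ k, |x s ω k| := rfl
    rw [this]
    exact integrable_finset_sum _ fun k _ => (hxint' s k).abs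
  have hηbd : ∀ s : ℝ, ∀ᵐ ω ∂μ, ∀ p, |η s ω p| ≤ 1 := by
    intro s
    filter_upwards [hηbasis s] with ω hω p
    obtain ⟨a, ha⟩ := hω
    rw [ha]
    unfold basisVec
    split <;> norm_num
  have hηint : ∀ s : ℝ, Integrable (η s) μ := fun s => by
    refine (integrable_const (1:ℝ)).mono' ((hηm s).aestronglyMeasurable) ?_
    filter_upwards [hηbd s] with ω hω
    rw [pi_norm_le_iff_of_nonneg zero_le_one]
    intro p
    rw [Real.norm_eq_abs]
    exact hω p
  have hprodint : ∀ (s : ℝ) (k p : Fin n), Integrable (fun ω => η s ω p * x s ω k) μ := by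
    intro s k p
    refine (hxint' s k).abs.mono'
      ((((measurable_pi_apply p).comp (hηm s)).mul
        ((measurable_pi_apply k).comp (hxm s))).aestronglyMeasurable) ?_
    filter_upwards [hηbd s] with ω hω
    rw [Real.norm_eq_abs, abs_mul]
    exact mul_le_of_le_one_left (abs_nonneg _) (hω p)
  have hkronint : ∀ s : ℝ, Integrable (fun ω => vecKron (η s ω) (x s ω)) μ := by
    intro s
    refine (honeint s).mono'
      ((measurable_pi_lambda _ fun p : Fin n × Fin n => ((measurable_pi_apply p.1).comp (hηm s)).mul
        ((measurable_pi_apply p.2).comp (hxm s))).aestronglyMeasurable) ?_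
    filter_upwards [hηbd s] with ω hω
    rw [pi_norm_le_iff_of_nonneg (oneNorm_nonneg _)]
    intro p
    rw [Real.norm_eq_abs]
    calc |vecKron (η s ω) (x s ω) p| = |η s ω p.1| * |x s ω p.2| := abs_mul _ _
      _ ≤ |x s ω p.2| := mul_le_of_le_one_left (abs_nonneg _) (hω p.1)
      _ ≤ oneNorm (x s ω) := abs_le_oneNorm _ _
  -- the core conditional-expectation computation
  have core : ∀ τ ∈ Set.Icc (0:ℝ) T, ∀ k : Fin n,
      ∫ ω, η t ω i * x (t - τ) ω k ∂μ
        = ∑ p : Fin n, matExp (τ • Pi.transpose) i p * ∫ ω, η (t - τ) ω p * x (t - τ) ω k ∂μ := by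
    intro τ hτ k
    have hm : 𝓕 (t - τ) ≤ mΩ := 𝓕.le (t - τ)
    haveI hfin : IsFiniteMeasure (μ.trim hm) := isFiniteMeasure_trim hm
    haveI : SigmaFinite (μ.trim hm) := hfin.toSigmaFinite
    set Eτ : Matrix (Fin n) (Fin n) ℝ := matExp (τ • Pi.transpose) with hEτ
    set L : (Fin n → ℝ) →L[ℝ] (Fin n → ℝ) :=
      LinearMap.toContinuousLinearMap Eτ.mulVecLin with hLdef
    have hLapp : ∀ v : Fin n → ℝ, L v = Eτ.mulVec v := fun v => rfl
    have hG0eq : (fun ω => Eτ.mulVec (η (t - τ) ω)) = fun ω => L (η (t - τ) ω) := by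
      funext ω; rw [hLapp]
    have hG0int : Integrable (fun ω => Eτ.mulVec (η (t - τ) ω)) μ := by
      rw [hG0eq]; exact L.integrable_comp (hηint (t - τ))
    have hcondτ : μ[η t | 𝓕 (t - τ)] =ᵐ[μ] fun ω => Eτ.mulVec (η (t - τ) ω) := hcond τ hτ
    have hgint1 : Integrable (fun ω => Eτ.mulVec (η (t - τ) ω) i) μ := integrable_eval hG0int i
    have hccomp : μ[(fun ω => η t ω i) | 𝓕 (t - τ)] =ᵐ[μ]
        fun ω => Eτ.mulVec (η (t - τ) ω) i := by
      refine (ae_eq_condExp_of_forall_setIntegral_eq hm (integrable_eval (hηint t) i)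
        (fun A hA hμA => hgint1.integrableOn)
        (fun A hA hμA => ?_) ?_).symm
      · have h1 : ∫ ω in A, Eτ.mulVec (η (t - τ) ω) i ∂μ
            = (∫ ω in A, Eτ.mulVec (η (t - τ) ω) ∂μ) i :=
          (integral_eval hG0int.integrableOn i).symm
        have h2 : ∫ ω in A, Eτ.mulVec (η (t - τ) ω) ∂μ = ∫ ω in A, (μ[η t | 𝓕 (t - τ)]) ω ∂μ :=
          integral_congr_ae (ae_restrict_of_ae hcondτ.symm)
        have h3 : ∫ ω in A, (μ[η t | 𝓕 (t - τ)]) ω ∂μ = ∫ ω in A, η t ω ∂μ :=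
          setIntegral_condExp hm (hηint t) hA
        have h4 : (∫ ω in A, η t ω ∂μ) i = ∫ ω in A, η t ω i ∂μ :=
          integral_eval (hηint t).integrableOn i
        rw [h1, h2, h3, h4]
      · refine StronglyMeasurable.aestronglyMeasurable ?_
        have hmeas' : Measurable[𝓕 (t - τ)] fun ω => Eτ.mulVec (η (t - τ) ω) i := by
          have hcomp : Measurable[𝓕 (t - τ)] fun ω => L (η (t - τ) ω) :=
            L.continuous.measurable.comp (hηmeas (t - τ))
          exact (measurable_pi_apply i).comp hcomp
        exact hmeas'.stronglyMeasurable
    have hxsm : StronglyMeasurable[𝓕 (t - τ)] (fun ω => x (t - τ) ω k) :=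
      ((measurable_pi_apply k).comp (hxmeas (t - τ))).stronglyMeasurable
    have hfg : Integrable ((fun ω => x (t - τ) ω k) * fun ω => η t ω i) μ := by
      refine (hxint' (t - τ) k).abs.mono'
        ((((measurable_pi_apply k).comp (hxm (t - τ))).mul
          ((measurable_pi_apply i).comp (hηm t))).aestronglyMeasurable) ?_
      filter_upwards [hηbd t] with ω hω
      show ‖x (t - τ) ω k * η t ω i‖ ≤ |x (t - τ) ω k|
      rw [Real.norm_eq_abs, abs_mul]
      exact mul_le_of_le_one_right (abs_nonneg _) (hω i)
    have hpull := condExp_mul_of_stronglyMeasurable_left hxsm hfg (integrable_eval (hηint t) i)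
    calc ∫ ω, η t ω i * x (t - τ) ω k ∂μ
        = ∫ ω, ((fun ω => x (t - τ) ω k) * fun ω => η t ω i) ω ∂μ := by
          refine integral_congr_ae (Filter.Eventually.of_forall fun ω => ?_)
          show η t ω i * x (t - τ) ω k = x (t - τ) ω k * η t ω i
          ring
      _ = ∫ ω, (μ[(fun ω => x (t - τ) ω k) * fun ω => η t ω i | 𝓕 (t - τ)]) ω ∂μ :=
          (integral_condExp hm).symm
      _ = ∫ ω, ((fun ω => x (t - τ) ω k) * μ[(fun ω => η t ω i) | 𝓕 (t - τ)]) ω ∂μ :=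
          integral_congr_ae hpull
      _ = ∫ ω, x (t - τ) ω k * Eτ.mulVec (η (t - τ) ω) i ∂μ := by
          refine integral_congr_ae ?_
          filter_upwards [hccomp] with ω hω
          show x (t - τ) ω k * (μ[(fun ω => η t ω i) | 𝓕 (t - τ)]) ω
            = x (t - τ) ω k * Eτ.mulVec (η (t - τ) ω) i
          rw [hω]
      _ = ∫ ω, ∑ p : Fin n, Eτ i p * (η (t - τ) ω p * x (t - τ) ω k) ∂μ := by
          refine integral_congr_ae (Filter.Eventually.of_forall fun ω => ?_)
          show x (t - τ) ω k * Eτ.mulVec (η (t - τ) ω) i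
            = ∑ p : Fin n, Eτ i p * (η (t - τ) ω p * x (t - τ) ω k)
          simp only [Matrix.mulVec, dotProduct]
          rw [Finset.mul_sum]
          exact Finset.sum_congr rfl fun p _ => by ring
      _ = ∑ p : Fin n, ∫ ω, Eτ i p * (η (t - τ) ω p * x (t - τ) ω k) ∂μ :=
          integral_finset_sum _ fun p _ => (hprodint (t - τ) k p).const_mul _
      _ = ∑ p : Fin n, Eτ i p * ∫ ω, η (t - τ) ω p * x (t - τ) ω k ∂μ := by
          exact Finset.sum_congr rfl fun p _ => integral_const_mul _ _
  -- setup for Fubini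
  set ν : Measure ℝ := volume.restrict (Set.Icc (0:ℝ) T) with hν
  haveI hνfin : IsFiniteMeasure ν := by
    constructor
    rw [hν, Measure.restrict_apply_univ]
    exact isCompact_Icc.measure_lt_top
  set c : ℝ → ℝ := fun τ => ∑ k : Fin n, q k τ with hcdef
  have hccont : Continuous c := continuous_finset_sum _ fun k _ => hqc k
  have hcnn : ∀ τ, 0 ≤ c τ := fun τ => Finset.sum_nonneg fun k _ => hqnn k τ
  have hqle : ∀ (k : Fin n) (τ : ℝ), q k τ ≤ c τ := fun k τ =>
    Finset.single_le_sum (f := fun j => q j τ) (fun j _ => hqnn j τ) (Finset.mem_univ k)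
  set g : ℝ → Ω → Fin n → ℝ := fun τ ω => η t ω i • fun k => q k τ * x (t - τ) ω k with hgdef
  have hgmeas : Measurable (Function.uncurry g) := by
    apply measurable_pi_lambda
    intro k
    exact ((measurable_pi_apply i).comp ((hηm t).comp measurable_snd)).mul
      (((hqc k).measurable.comp measurable_fst).mul
        ((measurable_pi_apply k).comp (hxjm.comp
          ((measurable_const.sub measurable_fst).prodMk measurable_snd))))
  have hgnorm : ∀ (τ : ℝ) (ω : Ω), (∀ p, |η t ω p| ≤ 1) →
      ‖g τ ω‖ ≤ c τ * oneNorm (x (t - τ) ω) := by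
    intro τ ω hω
    rw [pi_norm_le_iff_of_nonneg (mul_nonneg (hcnn τ) (oneNorm_nonneg _))]
    intro k
    rw [Real.norm_eq_abs]
    have h0 : g τ ω k = η t ω i * (q k τ * x (t - τ) ω k) := rfl
    rw [h0, abs_mul, abs_mul]
    calc |η t ω i| * (|q k τ| * |x (t - τ) ω k|)
        ≤ 1 * (c τ * oneNorm (x (t - τ) ω)) := by
          refine mul_le_mul (hω i) (mul_le_mul ?_ (abs_le_oneNorm _ _) (abs_nonneg _) (hcnn τ))
            (mul_nonneg (abs_nonneg _) (abs_nonneg _)) zero_le_one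
          rw [abs_of_nonneg (hqnn k τ)]
          exact hqle k τ
      _ = c τ * oneNorm (x (t - τ) ω) := one_mul _
  have hgsec : ∀ τ : ℝ, Integrable (g τ) μ := by
    intro τ
    refine ((honeint (t - τ)).const_mul (c τ)).mono'
      ((measurable_pi_lambda _ fun k => ((measurable_pi_apply i).comp (hηm t)).mul
        (measurable_const.mul ((measurable_pi_apply k).comp (hxm (t - τ))))).aestronglyMeasurable) ?_
    filter_upwards [hηbd t] with ω hω
    exact hgnorm τ ω hω
  -- integrability on the product space
  obtain ⟨K, hK⟩ := hxbdd
  set K' : ℝ := max K 0 with hK'def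
  have hxKm : Measurable (fun z : ℝ × Ω => oneNorm (x (t - z.1) z.2)) := by
    have : (fun z : ℝ × Ω => oneNorm (x (t - z.1) z.2))
        = fun z => ∑ k, |x (t - z.1) z.2 k| := rfl
    rw [this]
    exact Finset.measurable_sum _ fun k _ => ((measurable_pi_apply k).comp
      (hxjm.comp ((measurable_const.sub measurable_fst).prodMk measurable_snd))).abs
  set B : ℝ × Ω → ℝ := fun z => c z.1 * oneNorm (x (t - z.1) z.2) with hBdef
  have hBm : Measurable B := (hccont.measurable.comp measurable_fst).mul hxKm
  set I : ℝ → ℝ := fun τ => ∫ ω, oneNorm (x (t - τ) ω) ∂μ with hIdef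
  have hIm : StronglyMeasurable I := hxKm.stronglyMeasurable.integral_prod_right'
  have hInn : ∀ τ, 0 ≤ I τ := fun τ => integral_nonneg fun ω => oneNorm_nonneg _
  have hIbd : ∀ τ ∈ Set.Icc (0:ℝ) T, I τ ≤ K' := by
    intro τ hτ
    refine le_trans (hK (t - τ) ⟨by linarith [hτ.2], by linarith [hτ.1]⟩) (le_max_left _ _)
  have hcII : Integrable (fun τ => c τ * I τ) ν := by
    refine Integrable.mono' (g := fun τ => c τ * K') ?_
      ((hccont.measurable.mul hIm.measurable).aestronglyMeasurable) ?_
    · exact (hccont.mul continuous_const).integrableOn_Icc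
    · filter_upwards [ae_restrict_mem measurableSet_Icc] with τ hτ
      rw [Real.norm_eq_abs, abs_of_nonneg (mul_nonneg (hcnn τ) (hInn τ))]
      exact mul_le_mul_of_nonneg_left (hIbd τ hτ) (hcnn τ)
  have hBint : Integrable B (ν.prod μ) := by
    refine (integrable_prod_iff hBm.aestronglyMeasurable).2 ⟨?_, ?_⟩
    · exact Filter.Eventually.of_forall fun τ => (honeint (t - τ)).const_mul (c τ)
    · have heq : (fun τ => ∫ ω, ‖B (τ, ω)‖ ∂μ) = fun τ => c τ * I τ := by
        funext τ
        rw [hIdef]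
        simp only [hBdef]
        rw [← integral_const_mul]
        refine integral_congr_ae (Filter.Eventually.of_forall fun ω => ?_)
        show ‖c τ * oneNorm (x (t - τ) ω)‖ = c τ * oneNorm (x (t - τ) ω)
        rw [Real.norm_eq_abs, abs_of_nonneg (mul_nonneg (hcnn τ) (oneNorm_nonneg _))]
      rw [heq]
      exact hcII
  have hgint : Integrable (Function.uncurry g) (ν.prod μ) := by
    refine hBint.mono' hgmeas.aestronglyMeasurable ?_
    filter_upwards [ae_prod_snd ν μ (hηbd t)] with z hz
    exact hgnorm z.1 z.2 hz
  -- S and its integrability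
  set S : ℝ → Fin n → ℝ := fun τ => ∫ ω, g τ ω ∂μ with hSdef
  have hSint : Integrable S ν := hgint.integral_prod_left
  -- the G functions
  set ζ : ℝ → Fin n × Fin n → ℝ := fun τ => ∫ ω, vecKron (η (t - τ) ω) (x (t - τ) ω) ∂μ with hζdef
  set Gg : Fin n → ℝ → Fin n → ℝ := fun j τ =>
    (q j τ • matKronRow (Matrix.single j i (1 : ℝ) * matExp (τ • Pi.transpose))
      (basisVec j)).mulVec (ζ τ) with hGgdef
  have hGcomp : ∀ (j : Fin n) (τ : ℝ) (k : Fin n),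
      Gg j τ k = (if k = j then 1 else 0)
        * (q k τ * ∑ p : Fin n, matExp (τ • Pi.transpose) i p * ζ τ (p, k)) := by
    intro j τ k
    show (∑ p : Fin n × Fin n,
        (q j τ • matKronRow (Matrix.single j i (1 : ℝ) * matExp (τ • Pi.transpose))
          (basisVec j)) k p * ζ τ p) = _
    simp only [Matrix.smul_apply, smul_eq_mul, matKronRow, Matrix.of_apply, Matrix.mul_apply,
      Matrix.single, basisVec, Fintype.sum_prod_type, ite_and, ite_mul, zero_mul,
      one_mul, mul_ite, mul_zero, Finset.sum_ite_eq, Finset.sum_ite_eq', Finset.mem_univ,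
      if_true]
    by_cases hkj : k = j
    · subst hkj
      simp only [if_true, if_pos rfl, Finset.mem_univ, Finset.sum_ite_eq, one_mul,
        Finset.mul_sum]
      refine Finset.sum_congr rfl fun p _ => by ring
    · have hjk : ¬ j = k := fun h => hkj h.symm
      simp [hjk, hkj]
  -- claim : S agrees with the sum of the G's on [0, T]
  have claim : ∀ τ ∈ Set.Icc (0:ℝ) T, S τ = ∑ j : Fin n, Gg j τ := by
    intro τ hτ
    funext k
    have hSk : S τ k = ∫ ω, η t ω i * (q k τ * x (t - τ) ω k) ∂μ := by
      rw [hSdef]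
      exact integral_eval (hgsec τ) k
    have hζval : ∀ p : Fin n, ζ τ (p, k) = ∫ ω, η (t - τ) ω p * x (t - τ) ω k ∂μ := by
      intro p
      rw [hζdef]
      exact integral_eval (hkronint (t - τ)) (p, k)
    have hrs : (∑ j : Fin n, Gg j τ) k
        = q k τ * ∑ p : Fin n, matExp (τ • Pi.transpose) i p * ζ τ (p, k) := by
      have : (∑ j : Fin n, Gg j τ) k = ∑ j : Fin n, Gg j τ k := by
        simp [Finset.sum_apply]
      rw [this]
      simp only [hGcomp, ite_mul, one_mul, zero_mul, Finset.sum_ite_eq, Finset.mem_univ,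
        if_true]
    rw [hSk, hrs]
    have h1 : ∫ ω, η t ω i * (q k τ * x (t - τ) ω k) ∂μ
        = q k τ * ∫ ω, η t ω i * x (t - τ) ω k ∂μ := by
      rw [← integral_const_mul]
      congr 1
      funext ω
      ring
    rw [h1, core τ hτ k]
    congr 1
    refine Finset.sum_congr rfl fun p _ => ?_
    rw [hζval p]
  -- masking continuous linear maps
  have hmaskdef : ∀ (j : Fin n) (v : Fin n → ℝ) (k : Fin n),
      (((ContinuousLinearMap.proj (R := ℝ) (φ := fun _ : Fin n => ℝ) j).smulRight
        ((fun l => if l = j then 1 else 0) : Fin n → ℝ)) v) k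
        = v j * (if k = j then 1 else 0) := by
    intro j v k
    rw [ContinuousLinearMap.smulRight_apply]
    simp [smul_eq_mul]
  have hmask : ∀ (j : Fin n) (τ : ℝ), τ ∈ Set.Icc (0:ℝ) T →
      Gg j τ = ((ContinuousLinearMap.proj (R := ℝ) (φ := fun _ : Fin n => ℝ) j).smulRight
        ((fun l => if l = j then 1 else 0) : Fin n → ℝ)) (S τ) := by
    intro j τ hτ
    funext k
    rw [hmaskdef, hGcomp j τ k, claim τ hτ]
    have h2 : (∑ l : Fin n, Gg l τ) j = ∑ l : Fin n, Gg l τ j := by simp [Finset.sum_apply]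
    rw [h2]
    simp only [hGcomp, ite_mul, one_mul, zero_mul, Finset.sum_ite_eq, Finset.mem_univ, if_true]
    by_cases hkj : k = j
    · subst hkj; simp
    · simp [hkj]
  have hGgint : ∀ j : Fin n, Integrable (Gg j) ν := by
    intro j
    refine (((ContinuousLinearMap.proj (R := ℝ) (φ := fun _ : Fin n => ℝ) j).smulRight
      ((fun l => if l = j then 1 else 0) : Fin n → ℝ)).integrable_comp hSint).congr ?_
    filter_upwards [ae_restrict_mem measurableSet_Icc] with τ hτ
    exact (hmask j τ hτ).symm
  -- now the chain of equalities
  have hLHSω : ∀ ω : Ω, η t ω i • (∫ τ in Set.Ici (0:ℝ), (fun k => q k τ * x (t - τ) ω k))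
      = ∫ τ, g τ ω ∂ν := by
    intro ω
    have h0 : ∫ τ in Set.Ici (0:ℝ), (fun k => q k τ * x (t - τ) ω k)
        = ∫ τ in Set.Icc (0:ℝ) T, (fun k => q k τ * x (t - τ) ω k) := by
      refine setIntegral_Ici_eq_Icc fun τ hτ => ?_
      funext k
      simp [hqsupp k τ hτ]
    rw [h0, hν]
    exact (integral_smul _ _).symm
  calc (∫ ω, η t ω i • (∫ τ in Set.Ici (0 : ℝ), (fun k => q k τ * x (t - τ) ω k)) ∂μ)
      = ∫ ω, (∫ τ, g τ ω ∂ν) ∂μ :=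
        integral_congr_ae (Filter.Eventually.of_forall fun ω => hLHSω ω)
    _ = ∫ τ, (∫ ω, g τ ω ∂μ) ∂ν := (integral_integral_swap hgint).symm
    _ = ∫ τ, S τ ∂ν := rfl
    _ = ∫ τ, (∑ j : Fin n, Gg j τ) ∂ν := by
        refine integral_congr_ae ?_
        filter_upwards [ae_restrict_mem measurableSet_Icc] with τ hτ
        exact claim τ hτ
    _ = ∑ j : Fin n, ∫ τ, Gg j τ ∂ν := integral_finset_sum _ fun j _ => hGgint j
    _ = ∑ j : Fin n, ∫ τ in Set.Ici (0:ℝ),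
          (q j τ • matKronRow (Matrix.single j i (1 : ℝ) * matExp (τ • Pi.transpose))
            (basisVec j)).mulVec (∫ ω, vecKron (η (t - τ) ω) (x (t - τ) ω) ∂μ) := by
        refine Finset.sum_congr rfl fun j _ => ?_
        rw [hν]
        refine (setIntegral_Ici_eq_Icc fun τ hτ => ?_).symm
        rw [hGgdef]
        simp [hqsupp j τ hτ]
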